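/- Let λ, κ, B̄ > 0, D̄ > 0, and r ≥ 0 be constants with r < D̄λ + κ. Define N(t) := λ/κ − (λ/κ − 1) e^{−κt}. Suppose m : [0,∞) → ℝ is differentiable with m'(t) = [r − D̄ κ N(t)] m(t) + (λ / N(t)) (B̄ − m(t)) for all t ≥ 0. Then m(t) → κ B̄ / (D̄ λ + κ − r) as t → ∞. -/

import Mathlib

open Filter Topology

/-- If `f' = -α f + g` on `[0,∞)` with `α > 0` and `g → 0`, then `f → 0`. -/
lemma decay_aux (α : ℝ) (hα : 0 < α) (f g : ℝ → ℝ)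
    (hf : ∀ t ≥ (0:ℝ), HasDerivWithinAt f (-α * f t + g t) (Set.Ici 0) t)
    (hg : Tendsto g atTop (𝓝 0)) : Tendsto f atTop (𝓝 0) := by
  rw [NormedAddCommGroup.tendsto_nhds_zero]
  intro ε hε
  have hε4 : 0 < ε * α / 4 := by positivity
  obtain ⟨T0, hT0⟩ := Metric.tendsto_atTop.mp hg _ hε4
  set T : ℝ := max T0 1 with hTdef
  have hT1 : (1:ℝ) ≤ T := le_max_right _ _
  have hT0' : (0:ℝ) ≤ T := le_trans zero_le_one hT1
  have hgT : ∀ t, T ≤ t → |g t| ≤ ε * α / 4 := by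
    intro t ht
    have := hT0 t (le_trans (le_max_left _ _) ht)
    rw [Real.dist_eq, sub_zero] at this
    exact this.le
  have hexp : ∀ x : ℝ, HasDerivAt (fun s => Real.exp (α * s)) (Real.exp (α * x) * α) x := by
    intro x
    simpa using ((hasDerivAt_id x).const_mul α).exp
  have hw : ∀ t ∈ Set.Ici T, HasDerivWithinAt (fun s => f s * Real.exp (α * s))
      (g t * Real.exp (α * t)) (Set.Ici T) t := by
    intro t ht
    have ht' : (0:ℝ) ≤ t := le_trans hT0' ht
    have h1 := ((hf t ht').mono (Set.Ici_subset_Ici.mpr hT0')).mul (hexp t).hasDerivWithinAt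
    refine h1.congr_deriv ?_
    ring
  have hmono : ∀ σ : ℝ, |σ| = 1 → MonotoneOn
      (fun s => ε / 2 * Real.exp (α * s) + σ * (f s * Real.exp (α * s))) (Set.Ici T) := by
    intro σ hσ
    have hd : ∀ x ∈ Set.Ici T, HasDerivWithinAt
        (fun s => ε / 2 * Real.exp (α * s) + σ * (f s * Real.exp (α * s)))
        (ε / 2 * (Real.exp (α * x) * α) + σ * (g x * Real.exp (α * x))) (Set.Ici T) x :=
      fun x hx => ((hexp x).hasDerivWithinAt.const_mul (ε/2)).add ((hw x hx).const_mul σ)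
    apply monotoneOn_of_deriv_nonneg (convex_Ici T)
    · exact fun x hx => (hd x hx).continuousWithinAt
    · intro x hx
      rw [interior_Ici] at hx
      exact ((hd x (Set.Ioi_subset_Ici_self hx)).hasDerivAt
        (Ici_mem_nhds hx)).differentiableAt.differentiableWithinAt
    · intro x hx
      rw [interior_Ici] at hx
      rw [((hd x (Set.Ioi_subset_Ici_self hx)).hasDerivAt (Ici_mem_nhds hx)).deriv]
      have h2 := hgT x (le_of_lt hx)
      have h3 := Real.exp_pos (α * x)
      have h4 : -(ε * α / 4) ≤ σ * g x := by
        have : |σ * g x| ≤ ε * α / 4 := by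
          rw [abs_mul, hσ, one_mul]; exact h2
        linarith [(abs_le.mp this).1]
      nlinarith [mul_nonneg (show (0:ℝ) ≤ ε / 2 * α + σ * g x by nlinarith) h3.le]
  have hm1 := hmono 1 (by norm_num)
  have hm2 := hmono (-1) (by norm_num)
  have hdec : Tendsto (fun t => |f T * Real.exp (α * T)| / Real.exp (α * t)) atTop (𝓝 0) :=
    tendsto_const_nhds.div_atTop
      (Real.tendsto_exp_atTop.comp (Tendsto.const_mul_atTop hα tendsto_id))
  filter_upwards [eventually_ge_atTop T,
    hdec.eventually_lt_const (show (0:ℝ) < ε / 2 by positivity)] with t ht hlt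
  have h1 : ε / 2 * Real.exp (α * T) + 1 * (f T * Real.exp (α * T)) ≤
      ε / 2 * Real.exp (α * t) + 1 * (f t * Real.exp (α * t)) :=
    hm1 Set.self_mem_Ici ht ht
  have h2 : ε / 2 * Real.exp (α * T) + (-1) * (f T * Real.exp (α * T)) ≤
      ε / 2 * Real.exp (α * t) + (-1) * (f t * Real.exp (α * t)) :=
    hm2 Set.self_mem_Ici ht ht
  have hET := Real.exp_pos (α * T)
  have hEt := Real.exp_pos (α * t)
  have hB1 : |f T * Real.exp (α * T)| < ε / 2 * Real.exp (α * t) := (div_lt_iff₀ hEt).mp hlt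
  have hBl := neg_abs_le (f T * Real.exp (α * T))
  have hBu := le_abs_self (f T * Real.exp (α * T))
  rw [Real.norm_eq_abs, abs_lt]
  constructor
  · nlinarith
  · nlinarith

/-- Long-time limit of the mean bank reserves in the second scaling regime with constant
limiting parameters (Section 5 of the paper): with `N(t) = λ/κ - (λ/κ - 1) e^{-κt}`
and `m' = [r - D̄ κ N(t)] m + (λ/N(t))(B̄ - m)`, one has
`m(t) → κ B̄ / (D̄ λ + κ - r)` as `t → ∞`. -/
theorem stmt12 (r lam κ Bbar Dbar : ℝ) (hr : 0 ≤ r) (hlam : 0 < lam) (hκ : 0 < κ)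
    (hB : 0 < Bbar) (hD : 0 < Dbar) (hrk : r < Dbar * lam + κ)
    (N m : ℝ → ℝ)
    (hN : ∀ t, N t = lam / κ - (lam / κ - 1) * Real.exp (-κ * t))
    (hm : ∀ t ≥ (0:ℝ), HasDerivWithinAt m
      ((r - Dbar * κ * N t) * m t + (lam / N t) * (Bbar - m t)) (Set.Ici 0) t) :
    Tendsto m atTop (𝓝 (κ * Bbar / (Dbar * lam + κ - r))) := by
  have hα : 0 < Dbar * lam + κ - r := by linarith
  have hκ' : κ ≠ 0 := hκ.ne'
  -- derivative of N
  have hNd : ∀ t, HasDerivAt N (lam - κ * N t) t := by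
    intro t
    have h1 : HasDerivAt (fun s : ℝ => -κ * s) (-κ) t := by
      simpa using (hasDerivAt_id t).const_mul (-κ)
    have h3 := (hasDerivAt_const t (lam / κ)).sub (h1.exp.const_mul (lam / κ - 1))
    have h4 : N = fun s => lam / κ - (lam / κ - 1) * Real.exp (-κ * s) := funext hN
    rw [h4]
    refine h3.congr_deriv ?_
    field_simp
    ring
  -- positivity of N on [0, ∞)
  have hNpos : ∀ t, 0 ≤ t → 0 < N t := by
    intro t ht
    rw [hN t]
    have he : 0 < Real.exp (-κ * t) := Real.exp_pos _
    have he1 : Real.exp (-κ * t) ≤ 1 := Real.exp_le_one_iff.mpr (by nlinarith)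
    have h0 : 0 < lam / κ := div_pos hlam hκ
    nlinarith
  -- derivative of E t = exp (Dbar * (1 - N t))
  have hEd : ∀ t, HasDerivAt (fun s => Real.exp (Dbar * (1 - N s)))
      (Real.exp (Dbar * (1 - N t)) * (Dbar * (0 - (lam - κ * N t)))) t := by
    intro t
    exact (((hasDerivAt_const t (1:ℝ)).sub (hNd t)).const_mul Dbar).exp
  -- the transformed function satisfies a stable linear ODE
  set C : ℝ := Real.exp (Dbar * (1 - lam / κ)) with hCdef
  have hCpos : 0 < C := Real.exp_pos _
  have hf : ∀ t ≥ (0:ℝ), HasDerivWithinAt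
      (fun t => m t * N t * Real.exp (Dbar * (1 - N t)) - lam * Bbar * C / (Dbar * lam + κ - r))
      (-(Dbar * lam + κ - r) *
        ((fun t => m t * N t * Real.exp (Dbar * (1 - N t))
          - lam * Bbar * C / (Dbar * lam + κ - r)) t)
        + (fun t => lam * Bbar * (Real.exp (Dbar * (1 - N t)) - C)) t) (Set.Ici 0) t := by
    intro t ht
    have h5 := (((hm t ht).mul (hNd t).hasDerivWithinAt).mul
      (hEd t).hasDerivWithinAt).sub_const (lam * Bbar * C / (Dbar * lam + κ - r))
    refine h5.congr_deriv ?_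
    simp only [Pi.mul_apply]
    have hNne : N t ≠ 0 := (hNpos t ht).ne'
    have hαne : Dbar * lam + κ - r ≠ 0 := hα.ne'
    field_simp
    ring
  have hexp0 : Tendsto (fun t : ℝ => Real.exp (-κ * t)) atTop (𝓝 0) :=
    Real.tendsto_exp_atBot.comp
      ((tendsto_const_mul_atBot_of_neg (by linarith : -κ < 0)).mpr tendsto_id)
  have hNlim : Tendsto N atTop (𝓝 (lam / κ)) := by
    have h : Tendsto (fun t : ℝ => lam / κ - (lam / κ - 1) * Real.exp (-κ * t)) atTop
        (𝓝 (lam / κ - (lam / κ - 1) * 0)) :=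
      tendsto_const_nhds.sub (hexp0.const_mul (lam / κ - 1))
    simp only [mul_zero, sub_zero] at h
    exact h.congr fun t => (hN t).symm
  have hElim : Tendsto (fun t => Real.exp (Dbar * (1 - N t))) atTop (𝓝 C) := by
    have h : Tendsto (fun t => Dbar * (1 - N t)) atTop (𝓝 (Dbar * (1 - lam / κ))) :=
      ((tendsto_const_nhds (x := (1:ℝ))).sub hNlim).const_mul Dbar
    exact (Real.continuous_exp.tendsto _).comp h
  have hg : Tendsto (fun t => lam * Bbar * (Real.exp (Dbar * (1 - N t)) - C)) atTop (𝓝 0) := by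
    have h : Tendsto (fun t => lam * Bbar * (Real.exp (Dbar * (1 - N t)) - C)) atTop
        (𝓝 (lam * Bbar * (C - C))) :=
      (hElim.sub (tendsto_const_nhds (x := C))).const_mul (lam * Bbar)
    simpa using h
  have hf0 := decay_aux (Dbar * lam + κ - r) hα _ _ hf hg
  have hJlim : Tendsto (fun t => m t * N t * Real.exp (Dbar * (1 - N t))) atTop
      (𝓝 (lam * Bbar * C / (Dbar * lam + κ - r))) := by
    have h := hf0.add_const (lam * Bbar * C / (Dbar * lam + κ - r))
    simp only [sub_add_cancel, zero_add] at h
    exact h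
  have hden : Tendsto (fun t => N t * Real.exp (Dbar * (1 - N t))) atTop
      (𝓝 (lam / κ * C)) := hNlim.mul hElim
  have hdenne : lam / κ * C ≠ 0 := by positivity
  have hquot := hJlim.div hden hdenne
  have hval : lam * Bbar * C / (Dbar * lam + κ - r) / (lam / κ * C) =
      κ * Bbar / (Dbar * lam + κ - r) := by
    have hαne : Dbar * lam + κ - r ≠ 0 := hα.ne'
    field_simp
  rw [hval] at hquot
  apply hquot.congr'
  filter_upwards [eventually_ge_atTop (0:ℝ)] with t ht
  have h1 : N t ≠ 0 := (hNpos t ht).ne'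
  have h2 : Real.exp (Dbar * (1 - N t)) ≠ 0 := Real.exp_ne_zero _
  simp only [Pi.div_apply]
  rw [mul_assoc, mul_div_assoc, div_self (mul_ne_zero h1 h2), mul_one]
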